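/- Suppose the open set condition holds with bounded open set V. Then for every tree P, the sets {V_{j_1…j_k} : (j_1,…,j_k) ∈ P} are pairwise disjoint. -/

import Mathlib

open Metric Filter Set

/-- The composition `ψ_{j 0} ∘ ψ_{j 1} ∘ ⋯ ∘ ψ_{j (k-1)}`. -/
noncomputable def iterMap {X : Type*} {m : ℕ} (ψ : Fin m → X → X) :
    (k : ℕ) → (Fin k → Fin m) → X → X
  | 0, _ => id
  | k + 1, j => ψ (j 0) ∘ iterMap ψ k (fun i => j i.succ)

/-- The index set `L^k = N_1 × ⋯ × N_k`, realized as the finset of functions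
`j : Fin k → Fin m` whose `i`-th component lies in `N (i+1)`. -/
def Lk {m : ℕ} (N : ℕ → Finset (Fin m)) (k : ℕ) : Finset (Fin k → Fin m) :=
  Finset.univ.filter fun j => ∀ i : Fin k, j i ∈ N (i + 1)

/-- Two finite sequences agree on their common initial segment. -/
def AgreesWith {m : ℕ} (x y : (k : ℕ) × (Fin k → Fin m)) : Prop :=
  ∀ (q : ℕ) (hx : q < x.1) (hy : q < y.1), x.2 ⟨q, hx⟩ = y.2 ⟨q, hy⟩

/-- A finite set `P` of finite sequences (elements of `K = ⋃_k L^k`) is a tree if every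
sequence `(j_1,…,j_k) ∈ K` agrees with some `(i_1,…,i_p) ∈ P` on the first `min {k,p}`
places, and moreover this element of `P` is unique among those with `p ≤ k`. -/
def IsTree {m : ℕ} (N : ℕ → Finset (Fin m)) (P : Finset ((k : ℕ) × (Fin k → Fin m))) :
    Prop :=
  (∀ x ∈ P, 1 ≤ x.1 ∧ ∀ i : Fin x.1, x.2 i ∈ N (i + 1)) ∧
  ∀ k : ℕ, 1 ≤ k → ∀ j : Fin k → Fin m, (∀ i : Fin k, j i ∈ N (i + 1)) →
    (∃ y ∈ P, AgreesWith ⟨k, j⟩ y) ∧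
    ∀ y ∈ P, y.1 ≤ k → AgreesWith ⟨k, j⟩ y →
      ∀ y' ∈ P, y'.1 ≤ k → AgreesWith ⟨k, j⟩ y' → y = y'

/-- Under the open set condition, for every tree `P` the sets
`{V_{j_1…j_k} : (j_1,…,j_k) ∈ P}` are pairwise disjoint. -/
theorem stmt8 {n m : ℕ}
    (ψ : Fin m → EuclideanSpace ℝ (Fin n) → EuclideanSpace ℝ (Fin n)) (r : Fin m → ℝ)
    (hψ : ∀ j x y, dist (ψ j x) (ψ j y) = r j * dist x y)
    (hr : ∀ j, 0 < r j ∧ r j < 1)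
    (N : ℕ → Finset (Fin m)) (hN : ∀ k, 1 ≤ k → (N k).Nonempty)
    (V : Set (EuclideanSpace ℝ (Fin n))) (hVo : IsOpen V)
    (hVb : Bornology.IsBounded V) (hVne : V.Nonempty)
    (hmap : ∀ j, ψ j '' V ⊆ V)
    (hdisj : ∀ i j, i ≠ j → Disjoint (ψ i '' V) (ψ j '' V))
    (P : Finset ((k : ℕ) × (Fin k → Fin m))) (hP : IsTree N P) :
    ∀ x ∈ P, ∀ y ∈ P, x ≠ y →
      Disjoint (iterMap ψ x.1 x.2 '' V) (iterMap ψ y.1 y.2 '' V) := by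

  -- injectivity of each ψ j
  have hinj : ∀ j, Function.Injective (ψ j) := by
    intro j a b hab
    have := hψ j a b
    rw [hab, dist_self] at this
    have hrj := (hr j).1
    have : dist a b = 0 := by
      by_contra h
      have : 0 < r j * dist a b := mul_pos hrj (lt_of_le_of_ne dist_nonneg (Ne.symm h))
      linarith
    exact dist_eq_zero.mp this
  -- each iterated image stays inside V
  have mapsInto : ∀ (k : ℕ) (j : Fin k → Fin m), iterMap ψ k j '' V ⊆ V := by
    intro k
    induction k with
    | zero => intro j; simp [iterMap]
    | succ k ih =>
      intro j
      have : iterMap ψ (k+1) j '' V = ψ (j 0) '' (iterMap ψ k (fun i => j i.succ) '' V) := by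
        rw [iterMap, Set.image_comp]
      rw [this]
      exact (Set.image_mono (ih _)).trans (hmap _)
  -- key lemma: sequences that first differ at index q give disjoint images
  have key : ∀ (q k k' : ℕ) (hk : q < k) (hk' : q < k')
      (j : Fin k → Fin m) (j' : Fin k' → Fin m),
      (∀ p (hp : p < q), j ⟨p, hp.trans hk⟩ = j' ⟨p, hp.trans hk'⟩) →
      j ⟨q, hk⟩ ≠ j' ⟨q, hk'⟩ →
      Disjoint (iterMap ψ k j '' V) (iterMap ψ k' j' '' V) := by
    intro q
    induction q with
    | zero =>
      intro k k' hk hk' j j' _ hne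
      obtain ⟨k1, rfl⟩ : ∃ k1, k = k1 + 1 := ⟨k - 1, by omega⟩
      obtain ⟨k2, rfl⟩ : ∃ k2, k' = k2 + 1 := ⟨k' - 1, by omega⟩
      have h1 : iterMap ψ (k1+1) j '' V ⊆ ψ (j 0) '' V := by
        rw [iterMap, Set.image_comp]
        exact Set.image_mono (mapsInto _ _)
      have h2 : iterMap ψ (k2+1) j' '' V ⊆ ψ (j' 0) '' V := by
        rw [iterMap, Set.image_comp]
        exact Set.image_mono (mapsInto _ _)
      have : j 0 ≠ j' 0 := hne
      exact ((hdisj _ _ this).mono h1 h2)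
    | succ q ih =>
      intro k k' hk hk' j j' hagree hne
      obtain ⟨k1, rfl⟩ : ∃ k1, k = k1 + 1 := ⟨k - 1, by omega⟩
      obtain ⟨k2, rfl⟩ : ∃ k2, k' = k2 + 1 := ⟨k' - 1, by omega⟩
      have h0 : j 0 = j' 0 := hagree 0 (Nat.succ_pos q)
      have htail : Disjoint (iterMap ψ k1 (fun i => j i.succ) '' V)
          (iterMap ψ k2 (fun i => j' i.succ) '' V) := by
        refine ih k1 k2 (by omega) (by omega) (fun i => j i.succ) (fun i => j' i.succ) ?_ ?_
        · intro p hp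
          have := hagree (p+1) (by omega)
          convert this using 2 <;> ext <;> simp
        · intro h
          apply hne
          convert h using 2 <;> ext <;> simp
      rw [iterMap, iterMap, Set.image_comp, Set.image_comp, h0]
      exact (Set.disjoint_image_of_injective (hinj _) htail)
  -- main argument
  intro x hx y hy hxy
  -- they cannot agree on the common initial segment
  have hnoagree : ¬ AgreesWith x y := by
    intro hag
    rcases le_total x.1 y.1 with hle | hle
    · have hy1 := (hP.1 y hy)
      have := (hP.2 y.1 hy1.1 y.2 hy1.2).2
      exact hxy (this x hx hle (fun q hq1 hq2 => (hag q hq2 hq1).symm)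
        y hy le_rfl (fun q hq1 hq2 => rfl))
    · have hx1 := (hP.1 x hx)
      have := (hP.2 x.1 hx1.1 x.2 hx1.2).2
      exact hxy (this x hx le_rfl (fun q hq1 hq2 => rfl)
        y hy hle (fun q hq1 hq2 => hag q hq1 hq2))
  -- find the least index where they differ
  simp only [AgreesWith, not_forall] at hnoagree
  have hex : ∃ q, ∃ (h1 : q < x.1) (h2 : q < y.1), x.2 ⟨q, h1⟩ ≠ y.2 ⟨q, h2⟩ := by
    obtain ⟨q, h1, h2, h3⟩ := hnoagree
    exact ⟨q, h1, h2, h3⟩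
  classical
  let q := Nat.find hex
  obtain ⟨h1, h2, h3⟩ := Nat.find_spec hex
  refine key q x.1 y.1 h1 h2 x.2 y.2 ?_ h3
  intro p hp
  by_contra hne
  exact (Nat.find_min hex hp) ⟨hp.trans h1, hp.trans h2, hne⟩
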